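/- Consider the activation (bootstrap percolation) process on G with source set S: initially all nodes of S are active; an inactive node becomes active in a round if it has at least 2f+1 active neighbors, or three distinctly colored active neighbors, or a trusted active neighbor. If G is strongly (2f+1,Δ,T)-robust with respect to S and S is nonempty, then the process activates all of V within at most |V| − 1 rounds. -/
import Mathlib


open Finset
open scoped Classical

def threeColors {V Γ : Type*} (Δ : V → Γ) (F : Finset V) : Prop :=
  ∃ u ∈ F, ∃ v ∈ F, ∃ w ∈ F, Δ u ≠ Δ v ∧ Δ v ≠ Δ w ∧ Δ u ≠ Δ w

def reachable {V Γ : Type*} [DecidableEq V] (N : V → Finset V) (Δ : V → Γ)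
    (T : Finset V) (r : ℕ) (C : Finset V) : Prop :=
  ∃ i ∈ C, r ≤ ((N i) \ C).card ∨ threeColors Δ ((N i) \ C) ∨ ∃ t ∈ (N i) \ C, t ∈ T

def strongRobust {V Γ : Type*} [Fintype V] [DecidableEq V] (N : V → Finset V) (Δ : V → Γ)
    (T : Finset V) (r : ℕ) (S : Finset V) : Prop :=
  ∀ C : Finset V, C.Nonempty → C ⊆ Sᶜ → reachable N Δ T r C

/-- One round of the activation (bootstrap percolation) process: an inactive node
activates if it has at least `r` active neighbors, or three distinctly colored active
neighbors, or a trusted active neighbor. -/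
noncomputable def step {V Γ : Type*} [Fintype V] [DecidableEq V]
    (N : V → Finset V) (Δ : V → Γ) (T : Finset V) (r : ℕ) (Act : Finset V) : Finset V :=
  Act ∪ Finset.univ.filter (fun i =>
    r ≤ ((N i) ∩ Act).card ∨ threeColors Δ ((N i) ∩ Act) ∨ ∃ t ∈ (N i) ∩ Act, t ∈ T)

theorem stmt5 {V Γ : Type*} [Fintype V] [DecidableEq V]
    (N : V → Finset V) (Δ : V → Γ) (T : Finset V) (f : ℕ) (S : Finset V)
    (hS : S.Nonempty)
    (hrob : strongRobust N Δ T (2 * f + 1) S) :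
    (step N Δ T (2 * f + 1))^[Fintype.card V - 1] S = Finset.univ := by
  set r := 2 * f + 1 with hr
  have hmono : ∀ Act : Finset V, Act ⊆ step N Δ T r Act := fun Act => subset_union_left
  have hgrow : ∀ Act : Finset V, S ⊆ Act → Act ≠ Finset.univ →
      Act.card + 1 ≤ (step N Δ T r Act).card := by
    intro Act hSA hne
    have hC : (Actᶜ).Nonempty := by
      rw [Finset.nonempty_iff_ne_empty]
      intro h
      exact hne (by rwa [Finset.compl_eq_empty_iff] at h)
    obtain ⟨i, hiC, hcond⟩ := hrob Actᶜ hC (Finset.compl_subset_compl.mpr hSA)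
    have hdiff : (N i) \ Actᶜ = (N i) ∩ Act := by
      ext x; simp
    rw [hdiff] at hcond
    have hi : i ∈ step N Δ T r Act := by
      apply Finset.mem_union_right
      simp only [Finset.mem_filter, Finset.mem_univ, true_and]
      exact hcond
    have hiA : i ∉ Act := by simpa using hiC
    have : Act ⊂ step N Δ T r Act :=
      ⟨hmono Act, fun h => hiA (h hi)⟩
    exact Finset.card_lt_card this
  have hSsub : ∀ k, S ⊆ (step N Δ T r)^[k] S := by
    intro k
    induction k with
    | zero => simp
    | succ n ih =>
      rw [Function.iterate_succ_apply']
      exact ih.trans (hmono _)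
  have hcard : ∀ k, min (Fintype.card V) (S.card + k) ≤ ((step N Δ T r)^[k] S).card := by
    intro k
    induction k with
    | zero => simp [min_le_right]
    | succ n ih =>
      rw [Function.iterate_succ_apply']
      by_cases h : (step N Δ T r)^[n] S = Finset.univ
      · rw [h, Finset.univ_subset_iff.mp (hmono Finset.univ), Finset.card_univ]
        exact min_le_left _ _
      · have := hgrow _ (hSsub n) h
        calc min (Fintype.card V) (S.card + (n+1))
            ≤ min (Fintype.card V) (S.card + n) + 1 := by omega
          _ ≤ ((step N Δ T r)^[n] S).card + 1 := by omega
          _ ≤ _ := this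
  have h1 : 1 ≤ S.card := Finset.card_pos.mpr hS
  have hV : 1 ≤ Fintype.card V := by
    obtain ⟨x, _⟩ := hS
    exact Fintype.card_pos_iff.mpr ⟨x⟩
  have hfin := hcard (Fintype.card V - 1)
  apply Finset.eq_univ_of_card
  have hle : ((step N Δ T r)^[Fintype.card V - 1] S).card ≤ Fintype.card V :=
    Finset.card_le_univ _
  omega
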